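/- If C : ℝ → Matrix (Fin 2) (Fin 2) ℝ is differentiable, satisfies the Riccati equation C'(t) = C(t)², and is defined for all t ∈ ℝ, then every real eigenvalue of C(0) is zero. -/

import Mathlib

open Real Set

lemma mulVec_norm_le (A : Matrix (Fin 2) (Fin 2) ℝ) (x : Fin 2 → ℝ) :
    ‖A.mulVec x‖ ≤ (∑ i, ∑ j, |A i j|) * ‖x‖ := by
  have hS : (0:ℝ) ≤ ∑ i, ∑ j, |A i j| := by positivity
  rw [pi_norm_le_iff_of_nonneg (by positivity)]
  intro i
  calc ‖A.mulVec x i‖ = |∑ j, A i j * x j| := rfl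
    _ ≤ ∑ j, |A i j * x j| := Finset.abs_sum_le_sum_abs _ _
    _ = ∑ j, |A i j| * |x j| := by simp [abs_mul]
    _ ≤ ∑ j, |A i j| * ‖x‖ := by
        refine Finset.sum_le_sum fun j _ => ?_
        have : |x j| ≤ ‖x‖ := by
          rw [← Real.norm_eq_abs]; exact norm_le_pi_norm x j
        exact mul_le_mul_of_nonneg_left this (abs_nonneg _)
    _ = (∑ j, |A i j|) * ‖x‖ := by rw [Finset.sum_mul]
    _ ≤ (∑ i, ∑ j, |A i j|) * ‖x‖ := by
        refine mul_le_mul_of_nonneg_right ?_ (norm_nonneg _)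
        exact Finset.single_le_sum (f := fun i => ∑ j, |A i j|)
          (fun k _ => by positivity) (Finset.mem_univ i)

theorem stmt1 (C : ℝ → Matrix (Fin 2) (Fin 2) ℝ)
    (hC : ∀ t i j, HasDerivAt (fun s => C s i j) ((C t ^ 2) i j) t)
    (μ : ℝ) (v : Fin 2 → ℝ) (hv : v ≠ 0) (heig : (C 0).mulVec v = μ • v) :
    μ = 0 := by
  by_contra hμ
  set T : ℝ := 1/μ with hT
  set a : ℝ := min 0 T - 1 with ha
  set b : ℝ := max 0 T + 1 with hb
  have hab : a < b := by
    have h1 : min 0 T ≤ max 0 T := le_trans (min_le_left _ _) (le_max_left _ _)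
    linarith
  -- continuity of entries
  have hcont : ∀ i j, Continuous fun t => C t i j := fun i j =>
    continuous_iff_continuousAt.mpr fun t => (hC t i j).continuousAt
  -- bound on the interval
  set ℓ : ℝ → ℝ := fun t => ∑ i, ∑ j, |C t i j| with hℓ
  have hℓc : Continuous ℓ := by
    apply continuous_finset_sum; intro i _
    apply continuous_finset_sum; intro j _
    exact (hcont i j).abs
  obtain ⟨t₁, ht₁, hmax⟩ :=
    isCompact_Icc.exists_isMaxOn (nonempty_Icc.mpr hab.le) hℓc.continuousOn (f := ℓ)
  set K : NNReal := (ℓ t₁).toNNReal with hK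
  have hKb : ∀ t ∈ Icc a b, ℓ t ≤ K := fun t ht =>
    (hmax ht).trans (Real.le_coe_toNNReal _)
  -- clamped vector field
  set proj : ℝ → ℝ := fun t => min (max t a) b with hproj
  have hprojmem : ∀ t, proj t ∈ Icc a b := fun t =>
    ⟨le_min (le_max_right _ _) hab.le, min_le_right _ _⟩
  have hprojeq : ∀ t ∈ Icc a b, proj t = t := fun t ht => by
    simp [hproj, max_eq_left ht.1, min_eq_left ht.2]
  set V : ℝ → (Fin 2 → ℝ) → (Fin 2 → ℝ) := fun t y => (C (proj t)).mulVec y with hV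
  have hlip : ∀ t, LipschitzWith K (V t) := by
    intro t
    apply LipschitzWith.of_dist_le_mul
    intro x y
    rw [dist_eq_norm, dist_eq_norm, hV]
    have : (C (proj t)).mulVec x - (C (proj t)).mulVec y = (C (proj t)).mulVec (x - y) := by
      rw [Matrix.mulVec_sub]
    rw [this]
    calc ‖(C (proj t)).mulVec (x - y)‖ ≤ ℓ (proj t) * ‖x - y‖ := mulVec_norm_le _ _
      _ ≤ K * ‖x - y‖ := mul_le_mul_of_nonneg_right (hKb _ (hprojmem t)) (norm_nonneg _)
  -- the function z
  set z : ℝ → Fin 2 → ℝ := fun s i => (1 - s*μ) * (∑ j, C s i j * v j) - μ * v i with hz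
  have hzderiv : ∀ t, HasDerivAt z (fun i =>
      (-μ) * (∑ j, C t i j * v j) + (1 - t*μ) * (∑ j, (C t ^ 2) i j * v j)) t := by
    intro t
    rw [hasDerivAt_pi]
    intro i
    have h1 : HasDerivAt (fun s => ∑ j, C s i j * v j) (∑ j, (C t ^ 2) i j * v j) t :=
      HasDerivAt.fun_sum fun j _ => (hC t i j).mul_const (v j)
    have h2 : HasDerivAt (fun s : ℝ => 1 - s*μ) (-μ) t := by
      simpa using ((hasDerivAt_id t).mul_const μ).const_sub 1
    exact (h2.mul h1).sub_const (μ * v i)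
  have hzODE : ∀ t ∈ Ioo a b, HasDerivAt z (V t (z t)) t := by
    intro t ht
    have hp : proj t = t := hprojeq t (Ioo_subset_Icc_self ht)
    have key : V t (z t) = fun i =>
        (-μ) * (∑ j, C t i j * v j) + (1 - t*μ) * (∑ j, (C t ^ 2) i j * v j) := by
      funext i
      show (C (proj t)).mulVec (z t) i = _
      rw [hp]
      simp only [hz, Matrix.mulVec, dotProduct, pow_two, Matrix.mul_apply,
        Fin.sum_univ_two]
      ring
    rw [key]
    exact hzderiv t
  have hzero : ∀ t ∈ Ioo a b, HasDerivAt (fun _ : ℝ => (0 : Fin 2 → ℝ)) (V t 0) t := by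
    intro t ht
    have : V t 0 = 0 := by simp [hV]
    rw [this]; exact hasDerivAt_const t 0
  have hz0 : z 0 = 0 := by
    funext i
    have h := congrFun heig i
    simp only [Matrix.mulVec, dotProduct, Pi.smul_apply, smul_eq_mul,
      Fin.sum_univ_two] at h
    simp only [hz, Fin.sum_univ_two, Pi.zero_apply]
    linarith
  have h0mem : (0:ℝ) ∈ Ioo a b :=
    ⟨by rw [ha]; have := min_le_left 0 T; linarith,
     by rw [hb]; have := le_max_left 0 T; linarith⟩
  have hTmem : T ∈ Icc a b :=
    ⟨by rw [ha]; have := min_le_right 0 T; linarith,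
     by rw [hb]; have := le_max_right 0 T; linarith⟩
  have heq : EqOn z (fun _ => (0 : Fin 2 → ℝ)) (Icc a b) := by
    apply ODE_solution_unique_of_mem_Icc (v := V) (s := fun _ => univ)
      (fun t _ => (hlip t).lipschitzOnWith) h0mem
    · exact fun t ht => ((hzderiv t).continuousAt).continuousWithinAt
    · exact hzODE
    · exact fun _ _ => mem_univ _
    · exact continuousOn_const
    · exact hzero
    · exact fun _ _ => mem_univ _
    · exact hz0
  have hzT := heq hTmem
  have : μ • v = 0 := by
    funext i
    have h0 := congrFun hzT i
    simp only [hz, Pi.zero_apply] at h0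
    have h1 : 1 - T*μ = 0 := by rw [hT]; field_simp; ring
    rw [h1, zero_mul, zero_sub, neg_eq_zero] at h0
    simpa using h0
  rcases smul_eq_zero.mp this with h | h
  · exact hμ h
  · exact hv h
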